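/- For n ≥ 2 and positive reals a_1 ≤ a_2 ≤ ... ≤ a_n satisfying a_1^{a_n} ≥ e^{-1}, the cyclic sum a_1^{a_2} + a_2^{a_3} + ... + a_n^{a_1} is at least the reversed sum ∑_{i=1}^{n} a_i^{a_{n+1-i}}. -/
import Mathlib

open Finset

lemma aux_mul_rpow (u s t : ℝ) (hu : 0 < u) (hs : 0 < s) (hst : s ≤ t)
    (hCu : -1 ≤ t * Real.log u) : s * u ^ s ≤ t * u ^ t := by
  rcases le_or_gt 1 u with h1 | h1
  · have h2 : u ^ s ≤ u ^ t := Real.rpow_le_rpow_of_exponent_le h1 hst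
    exact mul_le_mul hst h2 (Real.rpow_nonneg hu.le _) (hs.le.trans hst)
  · have hlu : Real.log u < 0 := Real.log_neg hu h1
    have key : s ≤ t * u ^ (t - s) := by
      have hexp : 1 + Real.log u * (t - s) ≤ u ^ (t - s) := by
        rw [Real.rpow_def_of_pos hu]
        have := Real.add_one_le_exp (Real.log u * (t - s))
        linarith
      nlinarith [mul_le_mul_of_nonneg_left hexp (hs.le.trans hst)]
    calc s * u ^ s ≤ (t * u ^ (t - s)) * u ^ s :=
          mul_le_mul_of_nonneg_right key (Real.rpow_nonneg hu.le _)
      _ = t * u ^ t := by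
          rw [mul_assoc, ← Real.rpow_add hu]; ring_nf

lemma diff_mono (x y s t : ℝ) (hx : 0 < x) (hxy : x ≤ y) (hs : 0 < s) (hst : s ≤ t)
    (hC : -1 ≤ t * Real.log x) : x ^ t - x ^ s ≤ y ^ t - y ^ s := by
  have ht : 0 < t := hs.trans_le hst
  have hmono : MonotoneOn (fun u : ℝ => u ^ t - u ^ s) (Set.Icc x y) := by
    apply monotoneOn_of_deriv_nonneg (convex_Icc x y)
    · intro u hu
      have hu0 : u ≠ 0 := (hx.trans_le hu.1).ne'
      exact ((Real.hasDerivAt_rpow_const (p := t) (Or.inl hu0)).sub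
        (Real.hasDerivAt_rpow_const (p := s) (Or.inl hu0))).continuousAt.continuousWithinAt
    · intro u hu
      rw [interior_Icc] at hu
      have hu0 : u ≠ 0 := (hx.trans hu.1).ne'
      exact (((Real.hasDerivAt_rpow_const (p := t) (Or.inl hu0)).sub
        (Real.hasDerivAt_rpow_const (p := s) (Or.inl hu0))).differentiableAt).differentiableWithinAt
    · intro u hu
      rw [interior_Icc] at hu
      have hu0 : (0:ℝ) < u := hx.trans hu.1
      have hderiv : deriv (fun u : ℝ => u ^ t - u ^ s) u
          = t * u ^ (t - 1) - s * u ^ (s - 1) :=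
        ((Real.hasDerivAt_rpow_const (p := t) (Or.inl hu0.ne')).sub
          (Real.hasDerivAt_rpow_const (p := s) (Or.inl hu0.ne'))).deriv
      rw [hderiv]
      have hCu : -1 ≤ t * Real.log u := by
        rcases le_or_gt 0 (Real.log u) with h | h
        · nlinarith
        · have : Real.log x ≤ Real.log u := Real.log_le_log hx hu.1.le
          nlinarith
      have hkey : s * u ^ s ≤ t * u ^ t := aux_mul_rpow u s t hu0 hs hst hCu
      have h1 : u ^ (t - 1) = u ^ t / u := by
        rw [Real.rpow_sub hu0, Real.rpow_one]
      have h2 : u ^ (s - 1) = u ^ s / u := by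
        rw [Real.rpow_sub hu0, Real.rpow_one]
      rw [h1, h2]
      rw [sub_nonneg, mul_div_assoc', mul_div_assoc', div_le_div_iff₀ hu0 hu0]
      nlinarith
  have := hmono (Set.left_mem_Icc.mpr hxy) (Set.right_mem_Icc.mpr hxy) hxy
  simpa using this

lemma key_sum (A : ℕ → ℝ) (hpos : 0 < A 0) (hmono : Monotone A) :
    ∀ n : ℕ, 1 ≤ n → -1 ≤ A (n - 1) * Real.log (A 0) →
    ∑ i ∈ range n, A i ^ A (n - 1 - i) ≤ ∑ i ∈ range n, A i ^ A ((i + 1) % n) := by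
  intro n
  induction n with
  | zero => intro h; omega
  | succ n ih =>
    intro _ hC
    rcases Nat.eq_zero_or_pos n with rfl | hn1
    · simp
    -- n ≥ 1; prove step
    have hApos : ∀ i, 0 < A i := fun i => hpos.trans_le (hmono (Nat.zero_le i))
    have hCn : -1 ≤ A (n - 1) * Real.log (A 0) := by
      have hle : A (n - 1) ≤ A (n + 1 - 1) := hmono (by omega)
      rcases le_or_gt 0 (Real.log (A 0)) with h | h
      · nlinarith [hApos (n-1)]
      · nlinarith
    have IH := ih hn1 hCn
    have hCn' : -1 ≤ A n * Real.log (A 0) := by simpa using hC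
    -- split RHS of goal
    have hRHS : ∑ i ∈ range (n + 1), A i ^ A ((i + 1) % (n + 1))
        = ∑ i ∈ range n, A i ^ A (i + 1) + A n ^ A 0 := by
      rw [Finset.sum_range_succ]
      congr 1
      · exact Finset.sum_congr rfl fun i hi => by
          rw [Nat.mod_eq_of_lt (by simpa using Nat.succ_lt_succ (Finset.mem_range.mp hi))]
      · rw [Nat.mod_self]
    -- split RHS of IH
    obtain ⟨m, rfl⟩ : ∃ m, n = m + 1 := ⟨n - 1, by omega⟩
    have hRHS2 : ∑ i ∈ range (m + 1), A i ^ A ((i + 1) % (m + 1))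
        = ∑ i ∈ range m, A i ^ A (i + 1) + A m ^ A 0 := by
      rw [Finset.sum_range_succ]
      congr 1
      · exact Finset.sum_congr rfl fun i hi => by
          rw [Nat.mod_eq_of_lt (by simpa using Nat.succ_lt_succ (Finset.mem_range.mp hi))]
      · rw [Nat.mod_self]
    have hsplit : ∑ i ∈ range (m + 1), A i ^ A (i + 1)
        = ∑ i ∈ range m, A i ^ A (i + 1) + A m ^ A (m + 1) := Finset.sum_range_succ _ _
    -- split LHS of goal
    have hLHS : ∑ i ∈ range (m + 2), A i ^ A (m + 1 + 1 - 1 - i)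
        = ∑ i ∈ range (m + 1), A i ^ A (m + 1 - i) + A (m + 1) ^ A 0 := by
      have e : m + 1 + 1 - 1 - (m + 1) = 0 := by omega
      rw [Finset.sum_range_succ, e]
      congr 1
    -- key exchange inequality
    have hexch : ∑ i ∈ range (m + 1), (A i ^ A (m + 1 - i) - A i ^ A (m - i))
        ≤ A m ^ A (m + 1) - A m ^ A 0 := by
      have hreflect : ∑ j ∈ range (m + 1),
          (A ((m + 1) - 1 - j) ^ A (m + 1 - ((m + 1) - 1 - j))
            - A ((m + 1) - 1 - j) ^ A (m - ((m + 1) - 1 - j)))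
          = ∑ i ∈ range (m + 1), (A i ^ A (m + 1 - i) - A i ^ A (m - i)) :=
        Finset.sum_range_reflect (fun i => A i ^ A (m + 1 - i) - A i ^ A (m - i)) (m + 1)
      rw [← hreflect]
      have htel : ∑ j ∈ range (m + 1), (A m ^ A (j + 1) - A m ^ A j)
          = A m ^ A (m + 1) - A m ^ A 0 := Finset.sum_range_sub (fun j => A m ^ A j) (m + 1)
      rw [← htel]
      apply Finset.sum_le_sum
      intro j hj
      have hjm : j < m + 1 := Finset.mem_range.mp hj
      have e1 : (m + 1) - 1 - j = m - j := by omega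
      have e2 : m + 1 - (m - j) = j + 1 := by omega
      have e3 : m - (m - j) = j := by omega
      rw [e1, e2, e3]
      apply diff_mono (A (m - j)) (A m) (A j) (A (j + 1)) (hApos _) (hmono (by omega))
        (hApos _) (hmono (by omega))
      -- condition: -1 ≤ A (j+1) * log (A (m - j))
      rcases le_or_gt 0 (Real.log (A (m - j))) with h | h
      · nlinarith [hApos (j+1)]
      · have hl : Real.log (A 0) ≤ Real.log (A (m - j)) :=
          Real.log_le_log hpos (hmono (Nat.zero_le _))
        have h1 : A (j + 1) ≤ A (m + 1) := hmono (by omega)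
        nlinarith [hApos (m+1)]
    rw [hRHS, hsplit, hLHS]
    rw [hRHS2] at IH
    have hsum : ∑ i ∈ range (m + 1), A i ^ A (m + 1 - i)
        ≤ ∑ i ∈ range (m + 1), A i ^ A (m - i) + (A m ^ A (m + 1) - A m ^ A 0) := by
      have := hexch
      rw [Finset.sum_sub_distrib] at this
      linarith
    have hIH' : ∑ i ∈ range (m + 1), A i ^ A (m + 1 - 1 - i)
        = ∑ i ∈ range (m + 1), A i ^ A (m - i) := by
      exact Finset.sum_congr rfl fun i _ => by norm_num
    rw [hIH'] at IH
    linarith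

theorem stmt_3 (n : ℕ) (hn : 2 ≤ n) (a : Fin n → ℝ)
    (hpos : ∀ i, 0 < a i) (hmono : Monotone a)
    (hC : a ⟨0, by omega⟩ ^ a ⟨n - 1, by omega⟩ ≥ Real.exp (-1)) :
    ∑ i : Fin n, a i ^ a (Fin.rev i) ≤
      ∑ i : Fin n, a i ^ a ⟨(i.val + 1) % n, Nat.mod_lt _ (by omega)⟩ := by
  have hn0 : 0 < n := by omega
  set A : ℕ → ℝ := fun i => if h : i < n then a ⟨i, h⟩ else a ⟨n - 1, by omega⟩ with hA
  have hA0 : A 0 = a ⟨0, by omega⟩ := by simp [hA, hn0]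
  have hAval : ∀ i : Fin n, A i.val = a i := by
    intro i; simp [hA, i.isLt]
  have hApos : 0 < A 0 := by rw [hA0]; exact hpos _
  have hAmono : Monotone A := by
    intro i j hij
    simp only [hA]
    split_ifs with h1 h2 h2
    · exact hmono (by simpa [Fin.le_def] using hij)
    · exact hmono (show (⟨i, h1⟩ : Fin n) ≤ ⟨n - 1, by omega⟩ by
        simp only [Fin.le_def]; omega)
    · exact (h1 (lt_of_le_of_lt hij h2)).elim
    · exact le_refl _
  have hAn1 : A (n - 1) = a ⟨n - 1, by omega⟩ := by
    simp only [hA]; rw [dif_pos (by omega)]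
  have hCnum : -1 ≤ A (n - 1) * Real.log (A 0) := by
    rw [hAn1, hA0]
    have h := hC
    rw [Real.rpow_def_of_pos (hpos _)] at h
    have h2 := Real.exp_le_exp.mp h
    nlinarith [h2]
  have key := key_sum A hApos hAmono n (by omega) hCnum
  calc ∑ i : Fin n, a i ^ a (Fin.rev i)
      = ∑ i : Fin n, A i.val ^ A (n - 1 - i.val) := by
        apply Finset.sum_congr rfl
        intro i _
        rw [hAval, show n - 1 - i.val = (Fin.rev i).val by rw [Fin.val_rev]; omega, hAval]
    _ = ∑ i ∈ range n, A i ^ A (n - 1 - i) :=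
        Fin.sum_univ_eq_sum_range (fun i => A i ^ A (n - 1 - i)) n
    _ ≤ ∑ i ∈ range n, A i ^ A ((i + 1) % n) := key
    _ = ∑ i : Fin n, A i.val ^ A ((i.val + 1) % n) :=
        (Fin.sum_univ_eq_sum_range (fun i => A i ^ A ((i + 1) % n)) n).symm
    _ = ∑ i : Fin n, a i ^ a ⟨(i.val + 1) % n, Nat.mod_lt _ (by omega)⟩ := by
        apply Finset.sum_congr rfl
        intro i _
        rw [hAval]
        congr 1
        simp only [hA]
        rw [dif_pos (Nat.mod_lt _ hn0)]
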